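/- If the node set of a graph G has decidable equality, then every walk w : W_G(x,z) reduces under the reflexive-transitive closure of the loop-reduction relation to a walk v in normal form, i.e., there exists v with w ⇝* v, v quasi-simple, and v admitting no further reduction. -/

import Mathlib

namespace HoWalk

variable {N : Type}

inductive Walk (E : N → N → Type) : N → N → Type where
  | nil (x : N) : Walk E x x
  | cons {x y z : N} (e : E x y) (w : Walk E y z) : Walk E x z

variable {E : N → N → Type}

def Walk.length : {x y : N} → Walk E x y → ℕ
  | _, _, .nil _ => 0
  | _, _, .cons _ w => w.length + 1

/-- Node membership: `y ∈ ⟨z⟩ := Empty`, `y ∈ (e ⊙ w) := (y = source e) ⊕ (y ∈ w)`. -/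
def Walk.mem (u : N) : {x y : N} → Walk E x y → Type
  | _, _, .nil _ => Empty
  | _, _, @Walk.cons _ _ a _ _ _ w => PLift (u = a) ⊕ Walk.mem u w

/-- A type is a proposition (h-prop). -/
def IsProp (X : Type) : Prop := ∀ a b : X, a = b

/-- A walk is quasi-simple if membership is propositional for every node. -/
def Walk.IsQuasi {x y : N} (w : Walk E x y) : Prop := ∀ z : N, IsProp (w.mem z)

/-- Walk concatenation. -/
def Walk.append : {x y z : N} → Walk E x y → Walk E y z → Walk E x z
  | _, _, _, .nil _, q => q
  | _, _, _, .cons e p, q => .cons e (p.append q)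

/-- A type is finite if there (merely) exists a bijection with `Fin n`. -/
def IsFiniteT (X : Type) : Prop := ∃ n : ℕ, Nonempty (X ≃ Fin n)

/-- A walk is a loop if its endpoints are equal. -/
inductive Walk.Loop : {x y : N} → Walk E x y → Prop
  | isLoop {x y : N} {w : Walk E x y} : x = y → w.Loop

/-- A walk is trivial if its length is zero. -/
inductive Walk.Trivial : {x y : N} → Walk E x y → Prop
  | isTrivial {x y : N} {w : Walk E x y} : w.length = 0 → w.Trivial

/-- A walk is nontrivial if it has at least one edge. -/
inductive Walk.NonTrivial : {x y : N} → Walk E x y → Prop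
  | hasEdge {x y z : N} {w : Walk E y z} (e : E x y) : (Walk.cons e w).NonTrivial

/-- A nontrivial loop. -/
inductive Walk.NonTrivialLoop : {x y : N} → Walk E x y → Prop
  | isLoop {x y z : N} {e : E x y} (p : x = z) (w : Walk E y z) :
      (Walk.cons e w).NonTrivialLoop

/-- The loop-reduction relation on walks. -/
inductive Red : {x y : N} → Walk E x y → Walk E x y → Prop
  | xi1 {x y : N} (p q : Walk E x y) :
      p.NonTrivialLoop → q.Trivial → Red p q
  | xi2 {x y z : N} (e : E x y) (p q : Walk E y z) :
      ¬ (Walk.cons e p).Loop → x ≠ y → Red p q →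
      Red (Walk.cons e p) (Walk.cons e q)
  | xi3 {x y z : N} (e : E x y) (p : Walk E y x) (q : Walk E x z) :
      ¬ ((Walk.cons e p).append q).Loop → (Walk.cons e p).Loop → q.NonTrivial →
      (w : Walk E x z) → w = (Walk.cons e p).append q → Red w q
section Aux

lemma Walk.mem_of_trivial : ∀ {x y : N} (w : Walk E x y), w.Trivial →
    ∀ u, w.mem u → False
  | _, _, .nil _, _, _, m => m.elim
  | _, _, .cons e w, ht, u, _ => by
      cases ht with
      | isTrivial h => simp [Walk.length] at h

def Walk.memAppendRight {u : N} :
    ∀ {a b c : N} (p : Walk E a b) (q : Walk E b c), q.mem u → (p.append q).mem u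
  | _, _, _, .nil _, q, m => m
  | _, _, _, .cons e p, q, m => Sum.inr (HoWalk.Walk.memAppendRight p q m)

lemma Walk.mem_source_append :
    ∀ {a b c : N} (p : Walk E a b) (q : Walk E b c), q.NonTrivial →
      Nonempty ((p.append q).mem b)
  | _, _, _, .nil _, q, hq => by
      cases hq with
      | hasEdge e => exact ⟨Sum.inl ⟨rfl⟩⟩
  | _, _, _, .cons e p, q, hq => by
      obtain ⟨m⟩ := HoWalk.Walk.mem_source_append p q hq
      exact ⟨Sum.inr m⟩

lemma red_mem {x z : N} {a b : Walk E x z} (h : Red a b) (u : N) :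
    Nonempty (b.mem u) → Nonempty (a.mem u) := by
  induction h with
  | xi1 p q hnl ht =>
      rintro ⟨m⟩
      exact (Walk.mem_of_trivial q ht u m).elim
  | xi2 e p q hl hxy hred ih =>
      rintro ⟨m⟩
      rcases m with m | m
      · exact ⟨Sum.inl m⟩
      · obtain ⟨m'⟩ := ih ⟨m⟩
        exact ⟨Sum.inr m'⟩
  | xi3 e p q hnl hl hq w hw =>
      rintro ⟨m⟩
      subst hw
      exact ⟨Sum.inr (Walk.memAppendRight p q m)⟩

lemma rtg_mem {x z : N} {a b : Walk E x z}
    (h : Relation.ReflTransGen (fun a b : Walk E x z => Red a b) a b) (u : N) :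
    Nonempty (b.mem u) → Nonempty (a.mem u) := by
  induction h with
  | refl => exact id
  | tail _ hstep ih => exact fun hm => ih (red_mem hstep u hm)

lemma not_loop_of_ne {x z : N} (hxz : x ≠ z) (w : Walk E x z) : ¬ w.Loop := by
  rintro ⟨h⟩; exact hxz h

lemma rtg_cons {x y z : N} (hxz : x ≠ z) (hxy : x ≠ y) (e : E x y)
    {p v : Walk E y z}
    (h : Relation.ReflTransGen (fun a b : Walk E y z => Red a b) p v) :
    Relation.ReflTransGen (fun a b : Walk E x z => Red a b)
      (Walk.cons e p) (Walk.cons e v) := by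
  induction h with
  | refl => exact Relation.ReflTransGen.refl
  | tail _ hstep ih =>
      exact ih.tail (Red.xi2 e _ _ (not_loop_of_ne hxz _) hxy hstep)

lemma Walk.length_append :
    ∀ {a b c : N} (p : Walk E a b) (q : Walk E b c),
      (p.append q).length = p.length + q.length
  | _, _, _, .nil _, q => by simp [Walk.append, Walk.length]
  | _, _, _, .cons e p, q => by
      simp [Walk.append, Walk.length, HoWalk.Walk.length_append p q]; omega

lemma Walk.split {x : N} :
    ∀ {y z : N} (p : Walk E y z), Nonempty (p.mem x) →
      ∃ (p₁ : Walk E y x) (p₂ : Walk E x z), p = p₁.append p₂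
  | _, _, .nil _, h => h.elim fun m => m.elim
  | _, _, @Walk.cons _ _ a b c f p', h => by
      obtain ⟨m⟩ := h
      rcases m with he | m
      · obtain ⟨he⟩ := he
        subst he
        exact ⟨Walk.nil _, Walk.cons f p', rfl⟩
      · obtain ⟨p₁, p₂, hp⟩ := HoWalk.Walk.split p' ⟨m⟩
        exact ⟨Walk.cons f p₁, p₂, by simp [Walk.append, hp]⟩

lemma Walk.eq_nil_of_trivial : ∀ {a b : N} (w : Walk E a b), w.Trivial →
    ∃ h : a = b, w = h ▸ Walk.nil a
  | _, _, .nil _, _ => ⟨rfl, rfl⟩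
  | _, _, .cons e w, ht => by cases ht with | isTrivial h => simp [Walk.length] at h

lemma nil_normal (x : N) : ¬ ∃ u : Walk E x x, Red (Walk.nil x) u := by
  rintro ⟨u, hr⟩
  generalize hn : (Walk.nil x : Walk E x x) = n at hr
  cases hr with
  | xi1 p q hnl ht => subst hn; cases hnl
  | xi2 e p q hl hxy hred => cases hn
  | xi3 e p q hnl hl hq w hw =>
      rw [← hn] at hw
      simp only [Walk.append] at hw
      cases hw

lemma nil_quasi (x : N) : (Walk.nil x : Walk E x x).IsQuasi :=
  fun _ a _ => a.elim

lemma normAux (n : ℕ) : ∀ {x z : N} (w : Walk E x z), w.length ≤ n →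
    ∃ v : Walk E x z,
      Relation.ReflTransGen (fun a b : Walk E x z => Red a b) w v ∧
      v.IsQuasi ∧ ¬ ∃ u : Walk E x z, Red v u := by
  induction n with
  | zero =>
      intro x z w hw
      cases w with
      | nil => exact ⟨Walk.nil _, .refl, nil_quasi _, nil_normal _⟩
      | cons e p => simp [Walk.length] at hw
  | succ n ih =>
      intro x z w hw
      cases w with
      | nil => exact ⟨Walk.nil _, .refl, nil_quasi _, nil_normal _⟩
      | cons e p =>
        rename_i y
        by_cases hxz : x = z
        · subst hxz
          refine ⟨Walk.nil x, Relation.ReflTransGen.single ?_, nil_quasi _, nil_normal _⟩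
          exact Red.xi1 _ _ (Walk.NonTrivialLoop.isLoop rfl p) (Walk.Trivial.isTrivial rfl)
        · -- x ≠ z
          by_cases hmem : Nonempty (p.mem x)
          · -- x occurs in p : split and reduce via xi3
            obtain ⟨p₁, p₂, hp⟩ := Walk.split p hmem
            have hp₂nt : p₂.NonTrivial := by
              cases p₂ with
              | nil => exact absurd rfl hxz
              | cons f q => exact Walk.NonTrivial.hasEdge f
            have hred : Red (Walk.cons e p) p₂ := by
              refine Red.xi3 e p₁ p₂ ?_ ⟨rfl⟩ hp₂nt _ (by simp [Walk.append, hp])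
              exact not_loop_of_ne hxz _
            have hlen : p₂.length ≤ n := by
              have := Walk.length_append p₁ p₂
              simp [Walk.length, hp, this] at hw
              omega
            obtain ⟨v, hrtg, hq, hn⟩ := ih p₂ hlen
            exact ⟨v, Relation.ReflTransGen.head hred hrtg, hq, hn⟩
          · -- x does not occur in p; in particular x ≠ y
            have hxy : x ≠ y := by
              intro h
              subst h
              cases p with
              | nil => exact hxz rfl
              | cons f p'' => exact hmem ⟨Sum.inl ⟨rfl⟩⟩
            obtain ⟨v, hrtg, hq, hn⟩ := ih p (by simp [Walk.length] at hw; omega)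
            have hxv : ¬ Nonempty (v.mem x) := fun h => hmem (rtg_mem hrtg x h)
            refine ⟨Walk.cons e v, rtg_cons hxz hxy e hrtg, ?_, ?_⟩
            · intro u a b
              rcases a with a | a <;> rcases b with b | b
              · cases a; cases b; rfl
              · exact absurd ⟨a.down ▸ b⟩ hxv
              · exact absurd ⟨b.down ▸ a⟩ hxv
              · exact congrArg Sum.inr (hq u a b)
            · rintro ⟨u, hr⟩
              generalize hcv : Walk.cons e v = cv at hr
              cases hr with
              | xi1 p' q' hnl ht =>
                  subst hcv
                  cases hnl with
                  | isLoop h _ => exact hxz h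
              | xi2 e' p' q' hl' hxy' hred' =>
                  injection hcv with h1 h2 h3 h4 h5
                  subst h2
                  rw [← eq_of_heq h5] at hred'
                  exact hn ⟨_, hred'⟩
              | xi3 e' p' q' hnl' hl' hq' w' hw' =>
                  rw [← hcv] at hw'
                  simp only [Walk.append] at hw'
                  injection hw' with h1 h2 h3 h4 h5
                  subst h2
                  have hv : v = p'.append u := eq_of_heq h5
                  obtain ⟨m⟩ := Walk.mem_source_append p' u hq'
                  exact hxv ⟨hv ▸ m⟩

end Aux

/-- Normalisation: with decidable node equality, every walk reduces (under the
reflexive-transitive closure of loop-reduction) to a normal form: a quasi-simple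
walk admitting no further reduction. -/
theorem normalisation (N : Type) (E : N → N → Type) [DecidableEq N]
    {x z : N} (w : Walk E x z) :
    ∃ v : Walk E x z,
      Relation.ReflTransGen (fun a b : Walk E x z => Red a b) w v ∧
      v.IsQuasi ∧ ¬ ∃ u : Walk E x z, Red v u := by
  exact normAux w.length w le_rfl
end HoWalk
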